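/- Let S ⊆ M ≅ ℤⁿ be a strictly positive semigroup with respect to a height function h : M → ℤ whose limit figure Δ_S is a polytope. If every vertex of Δ_S lifts to S, then every vertex is a rational point, and moreover every rational point p ∈ Δ_S ∩ (M ⊗ ℚ) lifts to S, i.e., there exists c ∈ ℚ_{>0} with c·p ∈ S. -/

import Mathlib

open Finset

/-- A rational linear system whose (real) columns are linearly independent has only
rational solutions. -/
lemma rat_sol {R ι : Type} [Fintype R] [Fintype ι] [DecidableEq ι] [DecidableEq R]
    (A : Matrix R ι ℚ) (b : R → ℚ) (x : ι → ℝ)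
    (hind : LinearIndependent ℚ (fun j i => A i j))
    (hx : ∀ i, ∑ j, (A i j : ℝ) * x j = (b i : ℝ)) :
    ∃ y : ι → ℚ, (∀ j, (y j : ℝ) = x j) ∧ ∀ i, ∑ j, A i j * y j = b i := by
  classical
  have hker : LinearMap.ker (Matrix.toLin' A) = ⊥ := by
    rw [LinearMap.ker_eq_bot']
    intro c hc
    rw [Fintype.linearIndependent_iff] at hind
    funext j
    refine hind c ?_ j
    funext i
    have h1 := congrFun hc i
    simp only [Matrix.toLin'_apply, Matrix.mulVec, dotProduct] at h1
    simpa [Finset.sum_apply, mul_comm] using h1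
  obtain ⟨g, hg⟩ := (Matrix.toLin' A).exists_leftInverse_of_injective hker
  set B := LinearMap.toMatrix' g with hB
  have hBA : B * A = 1 := by
    have h2 : LinearMap.toMatrix' (g ∘ₗ Matrix.toLin' A) = B * A := by
      rw [LinearMap.toMatrix'_comp, LinearMap.toMatrix'_toLin']
    rw [hg, LinearMap.toMatrix'_id] at h2
    exact h2.symm
  set y : ι → ℚ := fun j => ∑ r, B j r * b r with hy
  have hyx : ∀ j, (y j : ℝ) = x j := by
    intro j
    have : ((y j : ℚ) : ℝ) = ∑ r, (B j r : ℝ) * (b r : ℝ) := by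
      rw [hy]; push_cast; rfl
    rw [this]
    have h3 : ∀ r, (B j r : ℝ) * (b r : ℝ) = ∑ j', (B j r : ℝ) * ((A r j' : ℝ) * x j') := by
      intro r
      rw [← hx r, Finset.mul_sum]
    rw [Finset.sum_congr rfl fun r _ => h3 r, Finset.sum_comm]
    have h4 : ∀ j', ∑ r, (B j r : ℝ) * ((A r j' : ℝ) * x j')
        = (((B * A) j j' : ℚ) : ℝ) * x j' := by
      intro j'
      rw [Matrix.mul_apply]
      push_cast
      rw [Finset.sum_mul]
      exact Finset.sum_congr rfl fun r _ => by ring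
    rw [Finset.sum_congr rfl fun j' _ => h4 j', hBA]
    simp only [Matrix.one_apply]
    rw [Finset.sum_eq_single j (fun b _ hb => by simp [Ne.symm hb]) (by simp)]
    simp
  refine ⟨y, hyx, fun i => ?_⟩
  have : ((∑ j, A i j * y j : ℚ) : ℝ) = ((b i : ℚ) : ℝ) := by
    push_cast
    rw [← hx i]
    exact Finset.sum_congr rfl fun j _ => by rw [hyx j]
  exact_mod_cast this

/-- A rational point in the real convex hull of a set of rational points is a
nonnegative rational combination of finitely many of them. -/
lemma rat_conv {n : ℕ} (V : Set (Fin n → ℚ)) (q : Fin n → ℚ)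
    (hq : (fun i => (q i : ℝ)) ∈ convexHull ℝ
      ((fun (v : Fin n → ℚ) (i : Fin n) => (v i : ℝ)) '' V)) :
    ∃ (m : ℕ) (c : Fin m → ℚ) (u : Fin m → (Fin n → ℚ)),
      (∀ l, 0 ≤ c l) ∧ (∀ l, u l ∈ V) ∧ ∀ i, ∑ l, c l * u l i = q i := by
  classical
  rw [convexHull_eq_union] at hq
  simp only [Set.mem_iUnion] at hq
  obtain ⟨t, hts, hai, hq⟩ := hq
  rw [Finset.convexHull_eq] at hq
  obtain ⟨wr, hwr0, hwr1, hcm⟩ := hq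
  rw [Finset.centerMass_eq_of_sum_1 _ _ hwr1] at hcm
  have hpre : ∀ y : {y // y ∈ t}, ∃ v : Fin n → ℚ, v ∈ V ∧ (fun i => ((v i : ℚ) : ℝ)) = (y : Fin n → ℝ) := by
    rintro ⟨y, hy⟩
    obtain ⟨v, hvV, hv⟩ := hts hy
    exact ⟨v, hvV, hv⟩
  choose ρ hρV hρc using hpre
  set A : Matrix (Option (Fin n)) {y // y ∈ t} ℚ :=
    fun r j => Option.rec 1 (fun i => ρ j i) r with hA
  set b : Option (Fin n) → ℚ := fun r => Option.rec 1 (fun i => q i) r with hb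
  set x : {y // y ∈ t} → ℝ := fun j => wr j with hxdef
  have hcols : ∀ (j : {y // y ∈ t}) (i : Fin n), ((ρ j i : ℚ) : ℝ) = (j : Fin n → ℝ) i :=
    fun j i => congrFun (hρc j) i
  have hx : ∀ r, ∑ j, (A r j : ℝ) * x j = (b r : ℝ) := by
    rintro (_ | i)
    · show ∑ j : {y // y ∈ t}, ((1:ℚ) : ℝ) * x j = ((1:ℚ) : ℝ)
      simpa using (Finset.sum_coe_sort t wr).trans hwr1
    · have hq1 := congrFun hcm i
      simp only [Finset.sum_apply, Pi.smul_apply, id, smul_eq_mul] at hq1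
      rw [← Finset.sum_coe_sort t (fun y => wr y * y i)] at hq1
      simp only [hA, hb]
      rw [← hq1]
      exact Finset.sum_congr rfl fun j _ => by rw [hcols j i]; ring
  have hind : LinearIndependent ℚ (fun j (r : Option (Fin n)) => A r j) := by
    rw [Fintype.linearIndependent_iff]
    intro g hg j
    have hgr : ∀ r, ∑ j, g j * A r j = 0 := by
      intro r
      have := congrFun hg r
      simpa [Finset.sum_apply] using this
    set gr : {y // y ∈ t} → ℝ := fun j => (g j : ℝ) with hgrdef
    have h1q : ∑ j, g j = 0 := by simpa [hA] using hgr none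
    have h1 : ∑ j, gr j = 0 := by
      show ∑ j : {y // y ∈ t}, ((g j : ℚ) : ℝ) = 0
      exact_mod_cast h1q
    have h2 : ∑ j, gr j • (j : Fin n → ℝ) = 0 := by
      funext i
      simp only [Finset.sum_apply, Pi.smul_apply, smul_eq_mul, Pi.zero_apply]
      have h2q : ∑ j, g j * ρ j i = 0 := by simpa [hA] using hgr (some i)
      have h2r : ∑ j, (g j : ℝ) * ((ρ j i : ℚ) : ℝ) = 0 := by exact_mod_cast h2q
      rw [← h2r]
      exact (Finset.sum_congr rfl fun j _ => by rw [hcols j i]).symm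
    rw [affineIndependent_iff_of_fintype] at hai
    have h3 := hai gr h1 (by
      rw [Finset.weightedVSub_eq_linear_combination _ h1]
      exact h2) j
    have h4 : (g j : ℝ) = 0 := h3
    exact_mod_cast h4
  obtain ⟨y, hyx, hAy⟩ := rat_sol A b x hind hx
  have hy0 : ∀ j, 0 ≤ y j := by
    intro j
    have : (0:ℝ) ≤ (y j : ℝ) := by rw [hyx j]; exact hwr0 j j.2
    exact_mod_cast this
  let e := Fintype.equivFin {y // y ∈ t}
  refine ⟨Fintype.card {y // y ∈ t}, fun l => y (e.symm l), fun l => ρ (e.symm l), fun l => hy0 _, fun l => hρV _,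
    fun i => ?_⟩
  rw [Equiv.sum_comp e.symm (fun j => y j * ρ j i)]
  have := hAy (some i)
  simp only [hA, hb] at this
  rw [← this]
  exact Finset.sum_congr rfl fun j _ => by ring

/- STATEMENT 5: Let `S ⊆ M ≅ ℤⁿ` be a strictly positive semigroup w.r.t. a
surjective height `h : M → ℤ`, whose limit figure `Δ_S = cl(cone S) ∩ h_ℝ⁻¹(1)`
is a polytope.  If every vertex (extreme point) of `Δ_S` lifts to `S` (some
positive real multiple lies in `S`), then every vertex is rational, and every
rational point of `Δ_S` lifts to `S` with a positive rational factor. -/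
theorem stmt5 (n : ℕ) (h : (Fin n → ℤ) →ₗ[ℤ] ℤ) (hsurj : Function.Surjective h)
    (S : AddSubmonoid (Fin n → ℤ))
    (hpos : ∀ s ∈ S, 0 ≤ h s) (hstrict : ∀ s ∈ S, h s = 0 → s = 0)
    (Δ : Set (Fin n → ℝ))
    (hΔ : Δ = (closure {y : Fin n → ℝ | ∃ c : ℝ, 0 ≤ c ∧ ∃ x ∈ convexHull ℝ
            ((fun (m : Fin n → ℤ) (i : Fin n) => (m i : ℝ)) '' (S : Set (Fin n → ℤ))),
          y = c • x})
        ∩ {y : Fin n → ℝ | ∑ i, y i * (h (Pi.single i 1) : ℝ) = 1})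
    (hpoly : ∃ W : Finset (Fin n → ℝ), Δ = convexHull ℝ (W : Set (Fin n → ℝ)))
    (hlift : ∀ p ∈ Set.extremePoints ℝ Δ,
      ∃ c : ℝ, 0 < c ∧ ∃ s ∈ S, (fun i => c * p i) = fun i => ((s i : ℤ) : ℝ)) :
    (∀ p ∈ Set.extremePoints ℝ Δ, ∃ q : Fin n → ℚ, p = fun i => ((q i : ℚ) : ℝ)) ∧
    (∀ q : Fin n → ℚ, (fun i => ((q i : ℚ) : ℝ)) ∈ Δ →
      ∃ c : ℚ, 0 < c ∧ ∃ s ∈ S, ∀ i, c * q i = ((s i : ℤ) : ℚ)) := by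
  classical
  have hhyper : ∀ p ∈ Δ, ∑ i, p i * (h (Pi.single i 1) : ℝ) = 1 := by
    intro p hp; rw [hΔ] at hp; exact hp.2
  have hsingle : ∀ i : Fin n, (fun j => if i = j then (1:ℤ) else 0) = Pi.single i 1 := by
    intro i; funext j
    rw [Pi.single_apply]
    by_cases hij : i = j
    · subst hij; simp
    · simp [hij, Ne.symm hij]
  have hext : ∀ p ∈ Set.extremePoints ℝ Δ, ∃ s ∈ S, 0 < h s ∧
      ∀ i, ((h s : ℤ) : ℝ) * p i = ((s i : ℤ) : ℝ) := by
    intro p hp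
    obtain ⟨c, hc, s, hsS, hcs⟩ := hlift p hp
    have hcs' : ∀ i, c * p i = ((s i : ℤ) : ℝ) := fun i => congrFun hcs i
    have h1 : ∑ i, p i * ((h (Pi.single i 1) : ℤ) : ℝ) = 1 := hhyper p hp.1
    have hhs : h s = ∑ i, s i * h (Pi.single i 1) := by
      conv_lhs => rw [pi_eq_sum_univ s]
      rw [map_sum]
      exact Finset.sum_congr rfl fun i _ => by rw [hsingle i, map_smul, smul_eq_mul]
    have hch : c = ((h s : ℤ) : ℝ) := by
      calc c = c * 1 := (mul_one c).symm
      _ = c * ∑ i, p i * ((h (Pi.single i 1) : ℤ) : ℝ) := by rw [h1]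
      _ = ∑ i, (c * p i) * ((h (Pi.single i 1) : ℤ) : ℝ) := by
            rw [Finset.mul_sum]; exact Finset.sum_congr rfl fun i _ => by ring
      _ = ∑ i, ((s i : ℤ) : ℝ) * ((h (Pi.single i 1) : ℤ) : ℝ) :=
            Finset.sum_congr rfl fun i _ => by rw [hcs' i]
      _ = ((h s : ℤ) : ℝ) := by rw [hhs]; push_cast; rfl
    have hhs0 : 0 < h s := by
      have : (0:ℝ) < ((h s : ℤ) : ℝ) := hch ▸ hc
      exact_mod_cast this
    exact ⟨s, hsS, hhs0, fun i => by rw [← hch]; exact hcs' i⟩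
  have part1 : ∀ p ∈ Set.extremePoints ℝ Δ, ∃ q : Fin n → ℚ, p = fun i => ((q i : ℚ) : ℝ) := by
    intro p hp
    obtain ⟨s, hsS, hhs, hrep⟩ := hext p hp
    refine ⟨fun i => (s i : ℚ) / (h s : ℚ), ?_⟩
    funext i
    have hne : ((h s : ℤ) : ℝ) ≠ 0 := by
      have : (0:ℤ) < h s := hhs
      exact_mod_cast ne_of_gt this
    show p i = (((fun i => (s i : ℚ) / (h s : ℚ)) i : ℚ) : ℝ)
    push_cast
    rw [eq_div_iff hne, mul_comm]
    exact hrep i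
  refine ⟨part1, ?_⟩
  intro q hq
  obtain ⟨W, hW⟩ := hpoly
  have hcomp : IsCompact Δ := by rw [hW]; exact W.finite_toSet.isCompact_convexHull ℝ
  have hconv : Convex ℝ Δ := by rw [hW]; exact convex_convexHull ℝ _
  have hEfin : (Set.extremePoints ℝ Δ).Finite := by
    apply W.finite_toSet.subset
    rw [hW]
    exact extremePoints_convexHull_subset
  have hΔE : Δ = convexHull ℝ (Set.extremePoints ℝ Δ) := by
    have h1 := closure_convexHull_extremePoints hcomp hconv
    rw [(hEfin.isClosed_convexHull ℝ).closure_eq] at h1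
    exact h1.symm
  set Vset : Set (Fin n → ℚ) :=
    {v | (fun i => ((v i : ℚ) : ℝ)) ∈ Set.extremePoints ℝ Δ} with hVset
  have hEV : Set.extremePoints ℝ Δ
      = (fun (v : Fin n → ℚ) (i : Fin n) => (v i : ℝ)) '' Vset := by
    apply Set.Subset.antisymm
    · intro p hp
      obtain ⟨qv, hqv⟩ := part1 p hp
      exact ⟨qv, by rw [hVset]; exact Set.mem_setOf.2 (hqv ▸ hp), hqv.symm⟩
    · rintro _ ⟨v, hv, rfl⟩
      exact hv
  have hqconv : (fun i => ((q i : ℚ) : ℝ)) ∈ convexHull ℝ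
      ((fun (v : Fin n → ℚ) (i : Fin n) => (v i : ℝ)) '' Vset) := by
    rw [← hEV, ← hΔE]
    exact hq
  obtain ⟨m, c, u, hc0, huV, hsum⟩ := rat_conv Vset q hqconv
  have hop : ∀ l : Fin m, ∃ s ∈ S, 0 < h s ∧ ∀ i, ((h s : ℤ) : ℚ) * u l i = ((s i : ℤ) : ℚ) := by
    intro l
    obtain ⟨s, hsS, hhs, hrep⟩ := hext _ (huV l)
    refine ⟨s, hsS, hhs, fun i => ?_⟩
    have := hrep i
    exact_mod_cast this
  choose sv hsvS hsvpos hsvrep using hop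
  set r : Fin m → ℚ := fun l => c l / ((h (sv l) : ℤ) : ℚ) with hr
  have hhne : ∀ l, ((h (sv l) : ℤ) : ℚ) ≠ 0 := by
    intro l
    have : (0:ℤ) < h (sv l) := hsvpos l
    exact_mod_cast ne_of_gt this
  have hr0 : ∀ l, 0 ≤ r l := by
    intro l
    apply div_nonneg (hc0 l)
    have : (0:ℤ) ≤ h (sv l) := le_of_lt (hsvpos l)
    exact_mod_cast this
  set d : ℕ := ∏ l, (r l).den with hd
  have hdpos : 0 < d := Finset.prod_pos fun l _ => (r l).pos
  have hmul : ∀ l, ((r l).den : ℚ) * r l = ((r l).num : ℚ) := by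
    intro l
    have hden : ((r l).den : ℚ) ≠ 0 := by
      exact_mod_cast Nat.pos_iff_ne_zero.1 (r l).pos
    calc ((r l).den : ℚ) * r l
        = ((r l).den : ℚ) * (((r l).num : ℚ) / ((r l).den : ℚ)) := by
          rw [Rat.num_div_den]
    _ = ((r l).num : ℚ) := by field_simp
  set k : Fin m → ℤ := fun l => ((d / (r l).den : ℕ) : ℤ) * (r l).num with hk
  have hk0 : ∀ l, 0 ≤ k l := fun l =>
    mul_nonneg (Int.natCast_nonneg _) (Rat.num_nonneg.2 (hr0 l))
  have hdr : ∀ l, (d : ℚ) * r l = ((k l : ℤ) : ℚ) := by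
    intro l
    have hdvd : (r l).den ∣ d := Finset.dvd_prod_of_mem _ (Finset.mem_univ l)
    have hdd : d = (r l).den * (d / (r l).den) := (Nat.mul_div_cancel' hdvd).symm
    simp only [hk]
    push_cast
    calc (d:ℚ) * r l = (((r l).den * (d / (r l).den) : ℕ) : ℚ) * r l := by rw [← hdd]
    _ = ((d / (r l).den : ℕ) : ℚ) * (((r l).den : ℚ) * r l) := by push_cast; ring
    _ = ((d / (r l).den : ℕ) : ℚ) * ((r l).num : ℚ) := by rw [hmul l]
  have hcl : ∀ l i, c l * u l i = r l * ((sv l i : ℤ) : ℚ) := by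
    intro l i
    rw [← hsvrep l i]
    simp only [hr]
    rw [div_mul_eq_mul_div, eq_div_iff (hhne l)]
    ring
  refine ⟨(d : ℚ), by exact_mod_cast hdpos, ∑ l, (k l).toNat • sv l,
    sum_mem (fun l _ => nsmul_mem (hsvS l) _), fun i => ?_⟩
  have htn : ∀ l, (((k l).toNat : ℕ) : ℚ) = ((k l : ℤ) : ℚ) := by
    intro l
    exact_mod_cast congrArg (fun z : ℤ => (z : ℚ)) (Int.toNat_of_nonneg (hk0 l))
  have hq_i : (d:ℚ) * q i = ∑ l, (((k l).toNat : ℕ) : ℚ) * ((sv l i : ℤ) : ℚ) := by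
    rw [← hsum i, Finset.mul_sum]
    refine Finset.sum_congr rfl fun l _ => ?_
    rw [hcl l i, ← mul_assoc, hdr l, htn l]
  rw [hq_i]
  have happ : (∑ l, (k l).toNat • sv l) i = ∑ l, ((k l).toNat : ℤ) * sv l i := by
    rw [Finset.sum_apply]
    exact Finset.sum_congr rfl fun l _ => by simp [nsmul_eq_mul]
  rw [happ]
  push_cast
  rfl
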